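/- arXiv:2604.09800 — 2 statements merged into one kernel-verified Lean document; each statement's English description precedes it below -/
import Mathlib

section
/- Suppose γ(s) satisfies the closest-point condition (γ(s) - r(s)) · t(s) = 0 for all s, where t(s) = (cos φ(s), sin φ(s)), dφ/ds = ν_o κ_o, dγ/ds = ν_o t, and r is unit speed with tangent a satisfying a·t = sin α, (γ-r)·t' component giving (γ-r)·n = ρ with n the unit normal. Then differentiating the orthogonality condition yields ν_o = sin α / (1 + ρ κ_o), provided 1 + ρ κ_o ≠ 0. -/
/-- Dot product on `ℝ × ℝ`. -/
def dot2 (u v : ℝ × ℝ) : ℝ := u.1 * v.1 + u.2 * v.2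

/-- Differentiating the closest-point orthogonality condition
`(γ - r) · t = 0` yields the shadow-point speed `ν_o = sin α / (1 + ρ κ_o)`. -/
theorem shadow_point_speed (r γ : ℝ → ℝ × ℝ) (θ φ α ρ ν κo : ℝ → ℝ)
    (t n : ℝ → ℝ × ℝ)
    (ht : ∀ s, t s = (Real.cos (φ s), Real.sin (φ s)))
    (hn : ∀ s, n s = (-Real.sin (φ s), Real.cos (φ s)))
    (hφ : ∀ s, HasDerivAt φ (ν s * κo s) s)
    (hγ : ∀ s, HasDerivAt γ (ν s • t s) s)
    (hr : ∀ s, HasDerivAt r (Real.cos (θ s), Real.sin (θ s)) s)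
    (hat : ∀ s, dot2 (Real.cos (θ s), Real.sin (θ s)) (t s) = Real.sin (α s))
    (horth : ∀ s, dot2 (γ s - r s) (t s) = 0)
    (hρn : ∀ s, dot2 (γ s - r s) (n s) = ρ s)
    (hne : ∀ s, 1 + ρ s * κo s ≠ 0) :
    ∀ s, ν s = Real.sin (α s) / (1 + ρ s * κo s) := by
  intro s
  have hcos : HasDerivAt (fun u => Real.cos (φ u)) (-Real.sin (φ s) * (ν s * κo s)) s :=
    (Real.hasDerivAt_cos (φ s)).comp s (hφ s)
  have hsin : HasDerivAt (fun u => Real.sin (φ u)) (Real.cos (φ s) * (ν s * κo s)) s :=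
    (Real.hasDerivAt_sin (φ s)).comp s (hφ s)
  have hγ1 : HasDerivAt (fun u => (γ u).1) (ν s * Real.cos (φ s)) s := by
    have h : HasDerivAt (fun u => (γ u).1) (ν s • t s).1 s := (hγ s).fst
    simpa [ht s] using h
  have hγ2 : HasDerivAt (fun u => (γ u).2) (ν s * Real.sin (φ s)) s := by
    have h : HasDerivAt (fun u => (γ u).2) (ν s • t s).2 s := (hγ s).snd
    simpa [ht s] using h
  have hr1 : HasDerivAt (fun u => (r u).1) (Real.cos (θ s)) s := (hr s).fst
  have hr2 : HasDerivAt (fun u => (r u).2) (Real.sin (θ s)) s := (hr s).snd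
  set A := (γ s).1 - (r s).1 with hA
  set B := (γ s).2 - (r s).2 with hB
  have hD : HasDerivAt
      (fun u => ((γ u).1 - (r u).1) * Real.cos (φ u) + ((γ u).2 - (r u).2) * Real.sin (φ u))
      ((ν s * Real.cos (φ s) - Real.cos (θ s)) * Real.cos (φ s)
        + A * (-Real.sin (φ s) * (ν s * κo s))
        + ((ν s * Real.sin (φ s) - Real.sin (θ s)) * Real.sin (φ s)
        + B * (Real.cos (φ s) * (ν s * κo s)))) s :=
    (((hγ1.sub hr1).mul hcos).add ((hγ2.sub hr2).mul hsin))
  have hzero : (fun u => ((γ u).1 - (r u).1) * Real.cos (φ u)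
      + ((γ u).2 - (r u).2) * Real.sin (φ u)) = fun _ => (0 : ℝ) := by
    funext u
    have h := horth u
    simpa [dot2, ht u] using h
  have hDzero : (ν s * Real.cos (φ s) - Real.cos (θ s)) * Real.cos (φ s)
        + A * (-Real.sin (φ s) * (ν s * κo s))
        + ((ν s * Real.sin (φ s) - Real.sin (θ s)) * Real.sin (φ s)
        + B * (Real.cos (φ s) * (ν s * κo s))) = 0 := by
    have h0 : HasDerivAt (fun _ : ℝ => (0 : ℝ)) 0 s := hasDerivAt_const s 0
    exact (hzero ▸ hD).unique h0
  have horth' : A * Real.cos (φ s) + B * Real.sin (φ s) = 0 := by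
    have h := horth s; simpa [dot2, ht s, hA, hB] using h
  have hρ' : A * (-Real.sin (φ s)) + B * Real.cos (φ s) = ρ s := by
    have h := hρn s; simpa [dot2, hn s, hA, hB] using h
  have hat' : Real.cos (θ s) * Real.cos (φ s) + Real.sin (θ s) * Real.sin (φ s)
      = Real.sin (α s) := by
    have h := hat s; simpa [dot2, ht s] using h
  have hpyth : Real.cos (φ s) ^ 2 + Real.sin (φ s) ^ 2 = 1 := by
    rw [add_comm]; exact Real.sin_sq_add_cos_sq (φ s)
  have key : ν s * (1 + ρ s * κo s) = Real.sin (α s) := by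
    linear_combination hDzero - ν s * hpyth + hat' - ν s * κo s * hρ'
  rw [eq_div_iff (hne s)]
  exact key
end

section
/- For constant object curvature κ̄ ≥ 0, along the closed-loop kinematics dρ/ds = -cos α, dα/ds = -κ + (κ̄/(1+ρκ̄)) sin α with κ = -μ₁ cos α + (ρ - μ₂) sin α, the function V(ρ,α) = -ln(sin α) + (1/2)(ρ - μ₂)² - ln(1 + ρκ̄) satisfies dV/ds = -μ₁ cos²α / sin α, which is ≤ 0 whenever 0 < α < π and μ₁ > 0. -/
/-- The Lyapunov function `V(ρ,α) = -ln(sin α) + (1/2)(ρ-μ₂)² - ln(1+ρκ̄)`. -/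
noncomputable def Lyap (κ' μ₂ ρ α : ℝ) : ℝ :=
  -Real.log (Real.sin α) + (1/2) * (ρ - μ₂)^2 - Real.log (1 + ρ * κ')

/-- Along the closed-loop contact kinematics with constant object curvature
`κ̄ ≥ 0` and feedback curvature `κ = -μ₁ cos α + (ρ-μ₂) sin α`, the Lyapunov
function satisfies `dV/ds = -μ₁ cos²α / sin α ≤ 0` in the admissible region. -/
theorem lyapunov_derivative (κ' μ₁ μ₂ : ℝ) (hκ : 0 ≤ κ')
    (ρ α : ℝ → ℝ)
    (hρ' : ∀ s, HasDerivAt ρ (-Real.cos (α s)) s)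
    (hα' : ∀ s, HasDerivAt α
      (-(-μ₁ * Real.cos (α s) + (ρ s - μ₂) * Real.sin (α s))
        + (κ' / (1 + ρ s * κ')) * Real.sin (α s)) s)
    (hρpos : ∀ s, 0 < ρ s)
    (hαrange : ∀ s, 0 < α s ∧ α s < Real.pi)
    (hden : ∀ s, 0 < 1 + ρ s * κ') :
    ∀ s, HasDerivAt (fun u => Lyap κ' μ₂ (ρ u) (α u))
        (-μ₁ * (Real.cos (α s))^2 / Real.sin (α s)) s ∧
      (0 < μ₁ → -μ₁ * (Real.cos (α s))^2 / Real.sin (α s) ≤ 0) := by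
  intro s
  have hsin : 0 < Real.sin (α s) := Real.sin_pos_of_pos_of_lt_pi (hαrange s).1 (hαrange s).2
  have hd := hden s
  set A' := (-(-μ₁ * Real.cos (α s) + (ρ s - μ₂) * Real.sin (α s))
        + (κ' / (1 + ρ s * κ')) * Real.sin (α s)) with hA'
  -- derivative of log (sin (α u))
  have h1 : HasDerivAt (fun u => Real.log (Real.sin (α u)))
      ((Real.sin (α s))⁻¹ * (Real.cos (α s) * A')) s := by
    have hs : HasDerivAt (fun u => Real.sin (α u)) (Real.cos (α s) * A') s :=
      (Real.hasDerivAt_sin (α s)).comp s (hα' s)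
    exact (Real.hasDerivAt_log (ne_of_gt hsin)).comp s hs
  -- derivative of (1/2)(ρ u - μ₂)^2
  have h2 : HasDerivAt (fun u => (1/2 : ℝ) * (ρ u - μ₂)^2)
      ((1/2) * (2 * (ρ s - μ₂) * (-Real.cos (α s)))) s := by
    have hsub : HasDerivAt (fun u => ρ u - μ₂) (-Real.cos (α s)) s :=
      (hρ' s).sub_const μ₂
    have := hsub.pow 2
    simpa [mul_comm, mul_left_comm, mul_assoc] using this.const_mul (1/2 : ℝ)
  -- derivative of log (1 + ρ u * κ')
  have h3 : HasDerivAt (fun u => Real.log (1 + ρ u * κ'))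
      ((1 + ρ s * κ')⁻¹ * (-Real.cos (α s) * κ')) s := by
    have hin : HasDerivAt (fun u => 1 + ρ u * κ') (-Real.cos (α s) * κ') s :=
      ((hρ' s).mul_const κ').const_add 1
    exact (Real.hasDerivAt_log (ne_of_gt hd)).comp s hin
  have hV : HasDerivAt (fun u => Lyap κ' μ₂ (ρ u) (α u))
      (-((Real.sin (α s))⁻¹ * (Real.cos (α s) * A'))
        + (1/2) * (2 * (ρ s - μ₂) * (-Real.cos (α s)))
        - (1 + ρ s * κ')⁻¹ * (-Real.cos (α s) * κ')) s := by
    exact (h1.neg.add h2).sub h3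
  constructor
  · convert hV using 1
    rw [hA']
    field_simp
    ring
  · intro hμ
    apply div_nonpos_of_nonpos_of_nonneg
    · nlinarith [sq_nonneg (Real.cos (α s))]
    · exact hsin.le
end
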